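/- arXiv:2405.06544 — 6 statements merged into one kernel-verified Lean document; each statement's English description precedes it below -/
import Mathlib

section
/- Let d_A, d_B, r be positive integers, let (u_i)_{i<r} be an orthonormal family in ℂ^{d_A} and (v_i)_{i<r} an orthonormal family in ℂ^{d_B}, let λ : Fin r → ℝ be nonnegative, and let ψ = Σ_{i<r} √(λ_i) · (u_i ⊗ v_i) ∈ ℂ^{d_A} ⊗ ℂ^{d_B}. Set ρ_A = Σ_{i<r} λ_i · u_i u_i† (a d_A × d_A matrix). Let P_A be a Hermitian d_A × d_A complex matrix and let P_B be a d_B × d_B complex matrix of operator norm at most 1. Then the real number tr(ρ_A P_A ρ_A P_A) satisfies tr(ρ_A P_A ρ_A P_A) ≥ |⟨ψ, (P_A ⊗ P_B) ψ⟩|² / r. -/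
open scoped Matrix Kronecker
open Matrix

private lemma helper2 {m n : Type*} [Fintype m] [Fintype n]
    (A C : m → ℂ) (B D : n → ℂ) (t : ℂ) :
    ∑ x, ∑ y, (A x * B y) * (t * C x * D y)
      = t * (∑ x, A x * C x) * ∑ y, B y * D y := by
  have h1 : ∀ x, ∑ y, (A x * B y) * (t * C x * D y)
      = (t * (A x * C x)) * ∑ y, B y * D y := by
    intro x
    rw [Finset.mul_sum]
    exact Finset.sum_congr rfl fun y _ => by ring
  calc ∑ x, ∑ y, (A x * B y) * (t * C x * D y)
      = ∑ x, (t * (A x * C x)) * ∑ y, B y * D y := Finset.sum_congr rfl fun x _ => h1 x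
    _ = (∑ x, t * (A x * C x)) * ∑ y, B y * D y := (Finset.sum_mul _ _ _).symm
    _ = t * (∑ x, A x * C x) * ∑ y, B y * D y := by rw [← Finset.mul_sum]

private lemma key_expand {dA dB r : ℕ}
    (α β : Fin r → ℂ) (f g : Fin r → Fin dA → ℂ) (h k : Fin r → Fin dB → ℂ) :
    ∑ p : Fin dA × Fin dB,
        (∑ i, α i * f i p.1 * h i p.2) * (∑ j, β j * g j p.1 * k j p.2)
      = ∑ i, ∑ j, (α i * β j) * ((∑ x, f i x * g j x) * ∑ y, h i y * k j y) := by
  simp only [Finset.sum_mul_sum]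
  rw [Finset.sum_comm]
  refine Finset.sum_congr rfl fun i _ => ?_
  rw [Finset.sum_comm]
  refine Finset.sum_congr rfl fun j _ => ?_
  simp only [Fintype.sum_prod_type]
  rw [Finset.mul_sum]
  refine Finset.sum_congr rfl fun x _ => ?_
  rw [Finset.mul_sum]
  refine Finset.sum_congr rfl fun y _ => ?_
  ring

private lemma bessel_aux {d r : ℕ} (v : Fin r → Fin d → ℂ)
    (hv : ∀ i j, ∑ b, (starRingEnd ℂ) (v i b) * v j b = if i = j then 1 else 0)
    (w : Fin d → ℂ) :
    ∑ i, Complex.normSq (∑ b, (starRingEnd ℂ) (v i b) * w b)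
      ≤ ∑ b, Complex.normSq (w b) := by
  classical
  let V : Fin r → EuclideanSpace ℂ (Fin d) := fun i => WithLp.toLp 2 (v i)
  let W : EuclideanSpace ℂ (Fin d) := WithLp.toLp 2 w
  have hV : Orthonormal ℂ V := by
    rw [orthonormal_iff_ite]
    intro i j
    simpa [V, PiLp.inner_apply, RCLike.inner_apply', mul_comm] using hv i j
  have h := hV.sum_inner_products_le (s := Finset.univ) W
  have h1 : ∀ i, ‖(inner ℂ (V i) W : ℂ)‖ ^ 2
      = Complex.normSq (∑ b, (starRingEnd ℂ) (v i b) * w b) := by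
    intro i
    rw [show (inner ℂ (V i) W : ℂ) = ∑ b, (starRingEnd ℂ) (v i b) * w b from by
      simp [V, W, PiLp.inner_apply, RCLike.inner_apply', mul_comm]]
    rw [Complex.sq_norm]
  have h2 : ‖W‖ ^ 2 = ∑ b, Complex.normSq (w b) := by
    rw [EuclideanSpace.norm_eq, Real.sq_sqrt (Finset.sum_nonneg fun _ _ => sq_nonneg _)]
    exact Finset.sum_congr rfl fun b _ => by
      rw [show W b = w b from rfl, Complex.sq_norm]
  calc ∑ i, Complex.normSq (∑ b, (starRingEnd ℂ) (v i b) * w b)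
      = ∑ i, ‖(inner ℂ (V i) W : ℂ)‖ ^ 2 := (Finset.sum_congr rfl fun i _ => (h1 i).symm)
    _ ≤ ‖W‖ ^ 2 := h
    _ = ∑ b, Complex.normSq (w b) := h2

set_option maxHeartbeats 1000000 in
/-- Bounding marginals via the Schmidt rank: if `ψ = Σ_i √λ_i u_i ⊗ v_i` has Schmidt
rank at most `r`, `ρ_A = Σ_i λ_i u_i u_i†`, `P_A` is Hermitian, and `P_B` has operator
norm at most `1`, then `tr(ρ_A P_A ρ_A P_A) ≥ |⟨ψ, (P_A ⊗ P_B)ψ⟩|²/r`. -/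
theorem schmidt_rank_marginal_bound
    (dA dB r : ℕ) (hdA : 0 < dA) (hdB : 0 < dB) (hr : 0 < r)
    (u : Fin r → Fin dA → ℂ) (v : Fin r → Fin dB → ℂ)
    (hu : ∀ i j, ∑ a, (starRingEnd ℂ) (u i a) * u j a = if i = j then 1 else 0)
    (hv : ∀ i j, ∑ b, (starRingEnd ℂ) (v i b) * v j b = if i = j then 1 else 0)
    (lam : Fin r → ℝ) (hlam : ∀ i, 0 ≤ lam i)
    (ψ : Fin dA × Fin dB → ℂ)
    (hψ : ∀ p, ψ p = ∑ i, (Real.sqrt (lam i) : ℂ) * u i p.1 * v i p.2)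
    (ρA : Matrix (Fin dA) (Fin dA) ℂ)
    (hρA : ρA = ∑ i, ((lam i : ℝ) : ℂ) •
      Matrix.of (fun a b => u i a * (starRingEnd ℂ) (u i b)))
    (PA : Matrix (Fin dA) (Fin dA) ℂ) (hPA : PA.IsHermitian)
    (PB : Matrix (Fin dB) (Fin dB) ℂ)
    (hPB : ∀ z : Fin dB → ℂ,
      ∑ b, Complex.normSq (PB.mulVec z b) ≤ ∑ b, Complex.normSq (z b)) :
    Complex.normSq (∑ p, (starRingEnd ℂ) (ψ p) * ((PA ⊗ₖ PB).mulVec ψ p)) / r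
      ≤ (Matrix.trace (ρA * PA * ρA * PA)).re := by
  classical
  set a : Fin r → Fin r → ℂ :=
    fun i j => ∑ x, (starRingEnd ℂ) (u i x) * PA.mulVec (u j) x with ha
  set nn : Fin r → Fin r → ℂ :=
    fun i j => ∑ y, (starRingEnd ℂ) (v i y) * PB.mulVec (v j) y with hnn
  -- conjugate of ψ
  have hconjψ : ∀ p : Fin dA × Fin dB, (starRingEnd ℂ) (ψ p)
      = ∑ i, ((Real.sqrt (lam i) : ℝ) : ℂ) * (starRingEnd ℂ) (u i p.1)
          * (starRingEnd ℂ) (v i p.2) := by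
    intro p
    rw [hψ p, map_sum]
    exact Finset.sum_congr rfl fun i _ => by
      simp only [_root_.map_mul, Complex.conj_ofReal]
  -- (PA ⊗ₖ PB) ψ
  have hMv : ∀ p : Fin dA × Fin dB, (PA ⊗ₖ PB).mulVec ψ p
      = ∑ j, ((Real.sqrt (lam j) : ℝ) : ℂ) * PA.mulVec (u j) p.1
          * PB.mulVec (v j) p.2 := by
    intro p
    calc (PA ⊗ₖ PB).mulVec ψ p
        = ∑ q : Fin dA × Fin dB, (PA p.1 q.1 * PB p.2 q.2) * ψ q := by
          simp [Matrix.mulVec, dotProduct, Matrix.kroneckerMap_apply]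
      _ = ∑ q : Fin dA × Fin dB, ∑ j, (PA p.1 q.1 * PB p.2 q.2) *
            (((Real.sqrt (lam j) : ℝ) : ℂ) * u j q.1 * v j q.2) := by
          refine Finset.sum_congr rfl fun q _ => ?_
          rw [hψ q, Finset.mul_sum]
      _ = ∑ j, ∑ q : Fin dA × Fin dB, (PA p.1 q.1 * PB p.2 q.2) *
            (((Real.sqrt (lam j) : ℝ) : ℂ) * u j q.1 * v j q.2) := Finset.sum_comm
      _ = ∑ j, ((Real.sqrt (lam j) : ℝ) : ℂ) * PA.mulVec (u j) p.1
            * PB.mulVec (v j) p.2 := by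
          refine Finset.sum_congr rfl fun j _ => ?_
          rw [Fintype.sum_prod_type]
          exact helper2 (fun x => PA p.1 x) (u j) (fun y => PB p.2 y) (v j) _
  -- the inner product as a double sum
  have hS : (∑ p, (starRingEnd ℂ) (ψ p) * ((PA ⊗ₖ PB).mulVec ψ p))
      = ∑ i, ∑ j, (((Real.sqrt (lam i) : ℝ) : ℂ) * ((Real.sqrt (lam j) : ℝ) : ℂ))
          * (a i j * nn i j) := by
    simp only [ha, hnn]
    calc (∑ p, (starRingEnd ℂ) (ψ p) * ((PA ⊗ₖ PB).mulVec ψ p))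
        = ∑ p : Fin dA × Fin dB,
            (∑ i, ((Real.sqrt (lam i) : ℝ) : ℂ) * (starRingEnd ℂ) (u i p.1)
              * (starRingEnd ℂ) (v i p.2)) *
            (∑ j, ((Real.sqrt (lam j) : ℝ) : ℂ) * PA.mulVec (u j) p.1
              * PB.mulVec (v j) p.2) :=
          Finset.sum_congr rfl fun p _ => by rw [hconjψ p, hMv p]
      _ = _ := key_expand (fun i => ((Real.sqrt (lam i) : ℝ) : ℂ))
            (fun j => ((Real.sqrt (lam j) : ℝ) : ℂ))
            (fun i x => (starRingEnd ℂ) (u i x)) (fun j => PA.mulVec (u j))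
            (fun i y => (starRingEnd ℂ) (v i y)) (fun j => PB.mulVec (v j))
  -- entries of ρA * PA
  have hAP : ∀ x z, (ρA * PA) x z
      = ∑ i, ((lam i : ℝ) : ℂ) * u i x * (∑ y, (starRingEnd ℂ) (u i y) * PA y z) := by
    intro x z
    rw [Matrix.mul_apply]
    simp only [hρA, Matrix.sum_apply, Matrix.smul_apply, Matrix.of_apply, smul_eq_mul,
      Finset.sum_mul]
    rw [Finset.sum_comm]
    refine Finset.sum_congr rfl fun i _ => ?_
    rw [Finset.mul_sum]
    exact Finset.sum_congr rfl fun y _ => by ring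
  have hAP2 : ∀ x z, (ρA * PA) z x
      = ∑ j, ((lam j : ℝ) : ℂ) * (∑ y, (starRingEnd ℂ) (u j y) * PA y x) * u j z := by
    intro x z
    rw [hAP z x]
    exact Finset.sum_congr rfl fun j _ => by ring
  have hw1 : ∀ i j, (∑ x, u i x * (∑ y, (starRingEnd ℂ) (u j y) * PA y x)) = a j i := by
    intro i j
    simp only [ha, Matrix.mulVec, dotProduct, Finset.mul_sum]
    rw [Finset.sum_comm]
    exact Finset.sum_congr rfl fun x _ => Finset.sum_congr rfl fun y _ => by ring
  have hw2 : ∀ i j, (∑ z, (∑ y, (starRingEnd ℂ) (u i y) * PA y z) * u j z) = a i j := by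
    intro i j
    simp only [ha, Matrix.mulVec, dotProduct, Finset.sum_mul, Finset.mul_sum]
    rw [Finset.sum_comm]
    exact Finset.sum_congr rfl fun x _ => Finset.sum_congr rfl fun y _ => by ring
  have haconj : ∀ i j, a j i = (starRingEnd ℂ) (a i j) := by
    intro i j
    have hP : ∀ x z, (starRingEnd ℂ) (PA x z) = PA z x := fun x z => hPA.apply z x
    simp only [ha, Matrix.mulVec, dotProduct, map_sum, _root_.map_mul,
      Complex.conj_conj, hP, Finset.mul_sum]
    rw [Finset.sum_comm]
    exact Finset.sum_congr rfl fun x _ => Finset.sum_congr rfl fun y _ => by ring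
  -- trace formula
  have htrC : Matrix.trace (ρA * PA * ρA * PA)
      = ((∑ i, ∑ j, lam i * lam j * Complex.normSq (a i j) : ℝ) : ℂ) := by
    have e1 : Matrix.trace (ρA * PA * ρA * PA)
        = ∑ p : Fin dA × Fin dA, (ρA * PA) p.1 p.2 * (ρA * PA) p.2 p.1 := by
      rw [Matrix.mul_assoc]
      calc Matrix.trace ((ρA * PA) * (ρA * PA))
          = ∑ x, ∑ z, (ρA * PA) x z * (ρA * PA) z x := by
            simp [Matrix.trace, Matrix.mul_apply]
        _ = ∑ p : Fin dA × Fin dA, (ρA * PA) p.1 p.2 * (ρA * PA) p.2 p.1 :=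
            (Fintype.sum_prod_type
              (fun p : Fin dA × Fin dA => (ρA * PA) p.1 p.2 * (ρA * PA) p.2 p.1)).symm
    rw [e1]
    calc ∑ p : Fin dA × Fin dA, (ρA * PA) p.1 p.2 * (ρA * PA) p.2 p.1
        = ∑ p : Fin dA × Fin dA,
            (∑ i, ((lam i : ℝ) : ℂ) * u i p.1 * (∑ y, (starRingEnd ℂ) (u i y) * PA y p.2)) *
            (∑ j, ((lam j : ℝ) : ℂ) * (∑ y, (starRingEnd ℂ) (u j y) * PA y p.1) * u j p.2) :=
          Finset.sum_congr rfl fun p _ => by rw [hAP p.1 p.2, hAP2 p.1 p.2]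
      _ = ∑ i, ∑ j, (((lam i : ℝ) : ℂ) * ((lam j : ℝ) : ℂ)) *
            ((∑ x, u i x * (∑ y, (starRingEnd ℂ) (u j y) * PA y x)) *
             (∑ z, (∑ y, (starRingEnd ℂ) (u i y) * PA y z) * u j z)) :=
          key_expand (fun i => ((lam i : ℝ) : ℂ)) (fun j => ((lam j : ℝ) : ℂ)) u
            (fun j x => ∑ y, (starRingEnd ℂ) (u j y) * PA y x)
            (fun i z => ∑ y, (starRingEnd ℂ) (u i y) * PA y z) u
      _ = ∑ i, ∑ j, (((lam i : ℝ) : ℂ) * ((lam j : ℝ) : ℂ)) * (a j i * a i j) := by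
          refine Finset.sum_congr rfl fun i _ => Finset.sum_congr rfl fun j _ => ?_
          rw [hw1 i j, hw2 i j]
      _ = ∑ i, ∑ j, (((lam i : ℝ) : ℂ) * ((lam j : ℝ) : ℂ)) *
            ((Complex.normSq (a i j) : ℝ) : ℂ) := by
          refine Finset.sum_congr rfl fun i _ => Finset.sum_congr rfl fun j _ => ?_
          rw [haconj i j, mul_comm ((starRingEnd ℂ) (a i j)) (a i j), Complex.mul_conj]
      _ = _ := by
          push_cast
          exact Finset.sum_congr rfl fun i _ => Finset.sum_congr rfl fun j _ => by ring
  have htrRe : (Matrix.trace (ρA * PA * ρA * PA)).re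
      = ∑ i, ∑ j, lam i * lam j * Complex.normSq (a i j) := by
    rw [htrC, Complex.ofReal_re]
  rw [htrRe, div_le_iff₀ (by exact_mod_cast hr : (0:ℝ) < (r:ℕ))]
  set f : Fin r × Fin r → ℝ :=
    fun q => Real.sqrt (lam q.1) * Real.sqrt (lam q.2) * ‖a q.1 q.2‖ with hf
  set g : Fin r × Fin r → ℝ := fun q => ‖nn q.1 q.2‖ with hg
  have habs : ‖∑ p, (starRingEnd ℂ) (ψ p) * ((PA ⊗ₖ PB).mulVec ψ p)‖
      ≤ ∑ q : Fin r × Fin r, f q * g q := by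
    have e2 : (∑ i, ∑ j, (((Real.sqrt (lam i) : ℝ) : ℂ) * ((Real.sqrt (lam j) : ℝ) : ℂ))
          * (a i j * nn i j))
        = ∑ q : Fin r × Fin r, (((Real.sqrt (lam q.1) : ℝ) : ℂ) *
            ((Real.sqrt (lam q.2) : ℝ) : ℂ)) * (a q.1 q.2 * nn q.1 q.2) :=
      (Fintype.sum_prod_type
        (fun q : Fin r × Fin r => (((Real.sqrt (lam q.1) : ℝ) : ℂ) *
          ((Real.sqrt (lam q.2) : ℝ) : ℂ)) * (a q.1 q.2 * nn q.1 q.2))).symm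
    rw [hS, e2]
    refine le_trans (norm_sum_le _ _) (le_of_eq (Finset.sum_congr rfl fun q _ => ?_))
    simp only [hf, hg, norm_mul, Complex.norm_real, Real.norm_eq_abs,
      abs_of_nonneg (Real.sqrt_nonneg _)]
    ring
  have hCS := Finset.sum_mul_sq_le_sq_mul_sq Finset.univ f g
  have hf2 : ∑ q : Fin r × Fin r, f q ^ 2
      = ∑ q : Fin r × Fin r, lam q.1 * lam q.2 * Complex.normSq (a q.1 q.2) := by
    refine Finset.sum_congr rfl fun q _ => ?_
    simp only [hf, mul_pow, Real.sq_sqrt (hlam _), Complex.sq_norm]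
  have hg2 : ∑ q : Fin r × Fin r, g q ^ 2 ≤ (r : ℝ) := by
    have hcol : ∀ j, ∑ i, Complex.normSq (nn i j) ≤ 1 := by
      intro j
      have hb := bessel_aux v hv (PB.mulVec (v j))
      have h1 : ∑ b, Complex.normSq (v j b) = 1 := by
        have h2 : ((∑ b, Complex.normSq (v j b) : ℝ) : ℂ) = 1 := by
          have h3 := hv j j
          rw [if_pos rfl] at h3
          rw [← h3]
          push_cast
          exact Finset.sum_congr rfl fun b _ => by
            rw [mul_comm ((starRingEnd ℂ) (v j b)) (v j b), Complex.mul_conj]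
        exact_mod_cast h2
      calc ∑ i, Complex.normSq (nn i j)
          ≤ ∑ b, Complex.normSq (PB.mulVec (v j) b) := by simpa [hnn] using hb
        _ ≤ ∑ b, Complex.normSq (v j b) := hPB _
        _ = 1 := h1
    calc ∑ q : Fin r × Fin r, g q ^ 2 = ∑ j, ∑ i, Complex.normSq (nn i j) := by
          simp only [hg, Complex.sq_norm, Fintype.sum_prod_type]
          exact Finset.sum_comm
      _ ≤ ∑ _j : Fin r, (1:ℝ) := Finset.sum_le_sum fun j _ => hcol j
      _ = r := by simp
  have hT0 : 0 ≤ ∑ q : Fin r × Fin r, lam q.1 * lam q.2 * Complex.normSq (a q.1 q.2) :=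
    Finset.sum_nonneg fun q _ =>
      mul_nonneg (mul_nonneg (hlam _) (hlam _)) (Complex.normSq_nonneg _)
  calc Complex.normSq (∑ p, (starRingEnd ℂ) (ψ p) * ((PA ⊗ₖ PB).mulVec ψ p))
      = ‖∑ p, (starRingEnd ℂ) (ψ p) * ((PA ⊗ₖ PB).mulVec ψ p)‖ ^ 2 :=
        (Complex.sq_norm _).symm
    _ ≤ (∑ q : Fin r × Fin r, f q * g q) ^ 2 :=
        pow_le_pow_left₀ (norm_nonneg _) habs 2
    _ ≤ (∑ q : Fin r × Fin r, f q ^ 2) * (∑ q : Fin r × Fin r, g q ^ 2) := hCS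
    _ ≤ (∑ q : Fin r × Fin r, lam q.1 * lam q.2 * Complex.normSq (a q.1 q.2)) * r := by
        rw [hf2]
        exact mul_le_mul_of_nonneg_left hg2 hT0
    _ = (∑ i, ∑ j, lam i * lam j * Complex.normSq (a i j)) * r := by
        rw [Fintype.sum_prod_type]
end

section
/- Let r be real with 0 < r < 1 and let C_r = {(x,y) ∈ [−1,1]² : x² + y² ≥ r²}. Define G : ℝ² → ℝ by G(x,y) = (x+y)² / (2(x²+y²)). Then G is Lipschitz continuous on C_r with Lipschitz constant at most 1/r: for all (x,y), (x',y') ∈ C_r, |G(x,y) − G(x',y')| ≤ (1/r) · √((x−x')² + (y−y')²). -/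
/-- The symmetric-estimator function `G(x,y) = (x+y)²/(2(x²+y²))` is Lipschitz with
constant at most `1/r` on the set `C_r = {(x,y) ∈ [−1,1]² : x² + y² ≥ r²}`. -/
theorem G_lipschitz_on_Cr (r : ℝ) (hr0 : 0 < r) (hr1 : r < 1)
    (x y x' y' : ℝ)
    (hx : x ∈ Set.Icc (-1 : ℝ) 1) (hy : y ∈ Set.Icc (-1 : ℝ) 1)
    (hx' : x' ∈ Set.Icc (-1 : ℝ) 1) (hy' : y' ∈ Set.Icc (-1 : ℝ) 1)
    (h1 : r ^ 2 ≤ x ^ 2 + y ^ 2) (h2 : r ^ 2 ≤ x' ^ 2 + y' ^ 2) :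
    |(x + y) ^ 2 / (2 * (x ^ 2 + y ^ 2)) - (x' + y') ^ 2 / (2 * (x' ^ 2 + y' ^ 2))|
      ≤ (1 / r) * Real.sqrt ((x - x') ^ 2 + (y - y') ^ 2) := by
  set A : ℝ := x ^ 2 + y ^ 2 with hAdef
  set B : ℝ := x' ^ 2 + y' ^ 2 with hBdef
  have hA : 0 < A := lt_of_lt_of_le (by positivity) h1
  have hB : 0 < B := lt_of_lt_of_le (by positivity) h2
  set s : ℝ := Real.sqrt ((x - x') ^ 2 + (y - y') ^ 2) with hs
  have hs0 : 0 ≤ s := Real.sqrt_nonneg _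
  have hs2 : s ^ 2 = (x - x') ^ 2 + (y - y') ^ 2 := Real.sq_sqrt (by positivity)
  set sA : ℝ := Real.sqrt A with hsA
  set sB : ℝ := Real.sqrt B with hsB
  have hsA2 : sA ^ 2 = A := Real.sq_sqrt hA.le
  have hsB2 : sB ^ 2 = B := Real.sq_sqrt hB.le
  have hsA0 : 0 < sA := Real.sqrt_pos.mpr hA
  have hsB0 : 0 < sB := Real.sqrt_pos.mpr hB
  have hrsA : r ≤ sA := by
    have := Real.sqrt_le_sqrt h1
    rwa [Real.sqrt_sq hr0.le] at this
  -- key algebraic identity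
  have key : (x + y) ^ 2 / (2 * A) - (x' + y') ^ 2 / (2 * B)
      = (x' * y - x * y') * (x * x' - y * y') / (A * B) := by
    field_simp
    ring
  rw [key, abs_div, abs_mul, abs_of_pos (mul_pos hA hB)]
  have h3 : |x' * y - x * y'| ≤ sB * s := by
    have hsq : (x' * y - x * y') ^ 2 ≤ (sB * s) ^ 2 := by
      rw [mul_pow, hsB2, hs2]
      nlinarith [sq_nonneg (x' * (x - x') + y' * (y - y'))]
    calc |x' * y - x * y'| = Real.sqrt ((x' * y - x * y') ^ 2) := (Real.sqrt_sq_eq_abs _).symm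
      _ ≤ Real.sqrt ((sB * s) ^ 2) := Real.sqrt_le_sqrt hsq
      _ = sB * s := Real.sqrt_sq (by positivity)
  have h4 : |x * x' - y * y'| ≤ sA * sB := by
    have hsq : (x * x' - y * y') ^ 2 ≤ (sA * sB) ^ 2 := by
      rw [mul_pow, hsA2, hsB2]
      nlinarith [sq_nonneg (x * y' + x' * y)]
    calc |x * x' - y * y'| = Real.sqrt ((x * x' - y * y') ^ 2) := (Real.sqrt_sq_eq_abs _).symm
      _ ≤ Real.sqrt ((sA * sB) ^ 2) := Real.sqrt_le_sqrt hsq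
      _ = sA * sB := Real.sqrt_sq (by positivity)
  have hnum : |x' * y - x * y'| * |x * x' - y * y'| ≤ (sB * s) * (sA * sB) :=
    mul_le_mul h3 h4 (abs_nonneg _) (by positivity)
  calc |x' * y - x * y'| * |x * x' - y * y'| / (A * B)
      ≤ (sB * s) * (sA * sB) / (A * B) := by gcongr
    _ = s / sA := by
        rw [← hsA2, ← hsB2]; field_simp
    _ ≤ (1 / r) * s := by
        rw [one_div, mul_comm, ← div_eq_mul_inv]
        exact div_le_div_of_nonneg_left hs0 hr0 hrsA
end

section
/- Let ψ, φ ∈ ℂ^{2^n} be unit vectors, set ρ = ψψ† and σ = φφ†, and let α_ρ(x) = tr(ρP_x) and α_σ(x) = tr(σP_x) (real numbers). Then, with the convention that a summand equals 0 whenever α_ρ(x)² + α_σ(x)² = 0, Σ_{x ∈ ({0,1}²)^n} [(α_ρ(x)² + α_σ(x)²)/2^{n+1}] · [(α_ρ(x) + α_σ(x))² / (2(α_ρ(x)² + α_σ(x)²))] = (1 + tr(ρσ))/2 = (1 + |⟨ψ,φ⟩|²)/2. -/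
open scoped Matrix Kronecker
open Matrix

noncomputable def pauli1 (vw : Bool × Bool) : Matrix (Fin 2) (Fin 2) ℂ :=
  (Complex.I ^ (vw.1 && vw.2).toNat) •
    ((!![0, 1; 1, 0] : Matrix (Fin 2) (Fin 2) ℂ) ^ vw.1.toNat *
      (!![1, 0; 0, -1] : Matrix (Fin 2) (Fin 2) ℂ) ^ vw.2.toNat)

/-- The `n`-qubit Pauli string `P_x = ⊗_i i^{v_i w_i} X^{v_i} Z^{w_i}`,
realized as a matrix indexed by `Fin n → Fin 2` (the Kronecker product of the
single-qubit factors). -/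
noncomputable def pauliString {n : ℕ} (x : Fin n → Bool × Bool) :
    Matrix (Fin n → Fin 2) (Fin n → Fin 2) ℂ :=
  Matrix.of fun a b => ∏ i, pauli1 (x i) (a i) (b i)

/-- The outer product `ψψ†`. -/
noncomputable def outer {ι : Type} (ψ : ι → ℂ) : Matrix ι ι ℂ :=
  Matrix.of fun a b => ψ a * (starRingEnd ℂ) (ψ b)

/-- `α_ψ(x) = tr(P_x ψψ†)`, a real number. -/
noncomputable def alpha {n : ℕ} (ψ : (Fin n → Fin 2) → ℂ) (x : Fin n → Bool × Bool) : ℝ :=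
  (Matrix.trace (pauliString x * outer ψ)).re

lemma pauli1_sum (a b c d : Fin 2) :
    ∑ vw : Bool × Bool, pauli1 vw a b * pauli1 vw c d =
      if a = d ∧ b = c then 2 else 0 := by
  rw [Fintype.sum_prod_type]
  fin_cases a <;> fin_cases b <;> fin_cases c <;> fin_cases d <;>
    simp [pauli1, Fin.sum_univ_two, Matrix.mul_apply, Fin.isValue] <;> norm_num

lemma pauliString_sum {n : ℕ} (a b c d : Fin n → Fin 2) :
    ∑ x : Fin n → Bool × Bool, pauliString x a b * pauliString x c d =
      if a = d ∧ b = c then (2 : ℂ) ^ n else 0 := by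
  have h1 : ∀ x : Fin n → Bool × Bool, pauliString x a b * pauliString x c d =
      ∏ i, (pauli1 (x i) (a i) (b i) * pauli1 (x i) (c i) (d i)) := by
    intro x
    simp [pauliString, Finset.prod_mul_distrib]
  simp_rw [h1]
  rw [← Fintype.piFinset_univ]
  rw [← Finset.prod_univ_sum (fun _ => (Finset.univ : Finset (Bool × Bool)))
      (fun i vw => pauli1 vw (a i) (b i) * pauli1 vw (c i) (d i))]
  simp_rw [pauli1_sum]
  by_cases h : a = d ∧ b = c
  · simp [h.1, h.2, Finset.prod_const]
  · rw [if_neg h]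
    have : ∃ i, ¬ (a i = d i ∧ b i = c i) := by
      by_contra hc
      push_neg at hc
      exact h ⟨funext fun i => (hc i).1, funext fun i => (hc i).2⟩
    obtain ⟨i, hi⟩ := this
    exact Finset.prod_eq_zero (Finset.mem_univ i) (by rw [if_neg hi])

lemma trace_pauli_sum {n : ℕ} (A B : Matrix (Fin n → Fin 2) (Fin n → Fin 2) ℂ) :
    ∑ x : Fin n → Bool × Bool,
        Matrix.trace (pauliString x * A) * Matrix.trace (pauliString x * B) =
      2 ^ n * Matrix.trace (A * B) := by
  have expand : ∀ (M : Matrix (Fin n → Fin 2) (Fin n → Fin 2) ℂ) (x : Fin n → Bool × Bool),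
      Matrix.trace (pauliString x * M) =
        ∑ p : (Fin n → Fin 2) × (Fin n → Fin 2), pauliString x p.1 p.2 * M p.2 p.1 := by
    intro M x
    rw [Matrix.trace, Fintype.sum_prod_type]
    simp [Matrix.diag, Matrix.mul_apply]
  simp_rw [expand, Finset.sum_mul_sum]
  rw [Finset.sum_comm]
  conv_lhs => enter [2, p]; rw [Finset.sum_comm]
  have h2 : ∀ p y : (Fin n → Fin 2) × (Fin n → Fin 2),
      (∑ x : Fin n → Bool × Bool,
        pauliString x p.1 p.2 * A p.2 p.1 * (pauliString x y.1 y.2 * B y.2 y.1))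
      = if p.1 = y.2 ∧ p.2 = y.1 then ((2:ℂ)^n) * (A p.2 p.1 * B y.2 y.1) else 0 := by
    intro p y
    have := pauliString_sum p.1 p.2 y.1 y.2
    calc (∑ x : Fin n → Bool × Bool,
            pauliString x p.1 p.2 * A p.2 p.1 * (pauliString x y.1 y.2 * B y.2 y.1))
        = (∑ x : Fin n → Bool × Bool, pauliString x p.1 p.2 * pauliString x y.1 y.2)
            * (A p.2 p.1 * B y.2 y.1) := by
          rw [Finset.sum_mul]
          exact Finset.sum_congr rfl fun x _ => by ring
      _ = _ := by rw [this]; split <;> simp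
  simp_rw [h2]
  have hq : ∀ p : (Fin n → Fin 2) × (Fin n → Fin 2),
      (∑ q : (Fin n → Fin 2) × (Fin n → Fin 2),
        if p.1 = q.2 ∧ p.2 = q.1 then ((2:ℂ)^n) * (A p.2 p.1 * B q.2 q.1) else 0)
      = 2 ^ n * (A p.2 p.1 * B p.1 p.2) := by
    intro p
    rw [Finset.sum_eq_single (p.2, p.1)]
    · simp
    · intro q _ hne
      rw [if_neg]
      rintro ⟨h1, h2⟩
      exact hne (Prod.ext h2.symm h1.symm)
    · simp
  simp_rw [hq, ← Finset.mul_sum]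
  congr 1
  rw [Matrix.trace, Fintype.sum_prod_type]
  simp only [Matrix.diag, Matrix.mul_apply]
  rw [Finset.sum_comm]

lemma pauli1_conj (vw : Bool × Bool) (a b : Fin 2) :
    (starRingEnd ℂ) (pauli1 vw a b) = pauli1 vw b a := by
  obtain ⟨v, w⟩ := vw
  fin_cases a <;> fin_cases b <;> cases v <;> cases w <;>
    simp [pauli1, Fin.sum_univ_two, Matrix.mul_apply, Fin.isValue]

lemma pauliString_conj {n : ℕ} (x : Fin n → Bool × Bool) (a b : Fin n → Fin 2) :
    (starRingEnd ℂ) (pauliString x a b) = pauliString x b a := by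
  simp only [pauliString, Matrix.of_apply, map_prod]
  exact Finset.prod_congr rfl fun i _ => pauli1_conj _ _ _

lemma trace_real {n : ℕ} (ψ : (Fin n → Fin 2) → ℂ) (x : Fin n → Bool × Bool) :
    (starRingEnd ℂ) (Matrix.trace (pauliString x * outer ψ))
      = Matrix.trace (pauliString x * outer ψ) := by
  simp only [Matrix.trace, Matrix.diag, Matrix.mul_apply, map_sum, _root_.map_mul,
    pauliString_conj, outer, Matrix.of_apply, Complex.conj_conj]
  rw [Finset.sum_comm]
  exact Finset.sum_congr rfl fun a _ => Finset.sum_congr rfl fun b _ => by ring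

lemma alpha_coe {n : ℕ} (ψ : (Fin n → Fin 2) → ℂ) (x : Fin n → Bool × Bool) :
    ((alpha ψ x : ℝ) : ℂ) = Matrix.trace (pauliString x * outer ψ) := by
  rw [alpha]
  exact Complex.conj_eq_iff_re.mp (trace_real ψ x)

lemma trace_outer_mul {ι : Type} [Fintype ι] (ψ φ : ι → ℂ) :
    Matrix.trace (outer ψ * outer φ)
      = (Complex.normSq (∑ a, (starRingEnd ℂ) (ψ a) * φ a) : ℂ) := by
  simp only [Matrix.trace, Matrix.diag, Matrix.mul_apply, outer, Matrix.of_apply]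
  have : (∑ a, ∑ b, ψ a * (starRingEnd ℂ) (ψ b) * (φ b * (starRingEnd ℂ) (φ a)))
      = (∑ b, (starRingEnd ℂ) (ψ b) * φ b) * (∑ a, ψ a * (starRingEnd ℂ) (φ a)) := by
    rw [Finset.sum_mul_sum, Finset.sum_comm]
    exact Finset.sum_congr rfl fun a _ => Finset.sum_congr rfl fun b _ => by ring
  rw [this, ← Complex.mul_conj]
  simp only [map_sum, _root_.map_mul, Complex.conj_conj]

lemma alpha_sq_sum {n : ℕ} (ψ φ : (Fin n → Fin 2) → ℂ) :
    ∑ x : Fin n → Bool × Bool, alpha ψ x * alpha φ x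
      = 2 ^ n * (Matrix.trace (outer ψ * outer φ)).re := by
  have hr : (((Matrix.trace (outer ψ * outer φ)).re : ℝ) : ℂ)
      = Matrix.trace (outer ψ * outer φ) := by
    rw [trace_outer_mul]; simp
  apply Complex.ofReal_injective
  push_cast
  simp_rw [alpha_coe]
  rw [hr]
  exact trace_pauli_sum (outer ψ) (outer φ)

lemma self_trace {ι : Type} [Fintype ι] (ψ : ι → ℂ)
    (h : ∑ a, Complex.normSq (ψ a) = 1) :
    (Matrix.trace (outer ψ * outer ψ)).re = 1 := by
  rw [trace_outer_mul]
  have h1 : (∑ a, (starRingEnd ℂ) (ψ a) * ψ a) = (1 : ℂ) := by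
    have h2 : ∀ a, (starRingEnd ℂ) (ψ a) * ψ a = (Complex.normSq (ψ a) : ℂ) :=
      fun a => by rw [mul_comm, Complex.mul_conj]
    simp_rw [h2]
    rw [← Complex.ofReal_sum, h, Complex.ofReal_one]
  rw [h1]
  simp

/-- Key identity of the symmetric protocol: the expectation of the bounded estimator
`G(α_ρ(x), α_σ(x)) = (α_ρ+α_σ)²/(2(α_ρ²+α_σ²))` under the mixture distribution
`p_mix = (p_ρ + p_σ)/2` equals `(1 + tr(ρσ))/2 = (1 + |⟨ψ,φ⟩|²)/2`.
(Summands with `α_ρ(x)² + α_σ(x)² = 0` vanish, consistent with the convention,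
since in Lean division by zero is zero.) -/
theorem symmetric_estimator_identity (n : ℕ)
    (ψ φ : (Fin n → Fin 2) → ℂ)
    (hψ : ∑ a, Complex.normSq (ψ a) = 1)
    (hφ : ∑ a, Complex.normSq (φ a) = 1) :
    (∑ x : Fin n → Bool × Bool,
        (((alpha ψ x) ^ 2 + (alpha φ x) ^ 2) / 2 ^ (n + 1)) *
          ((alpha ψ x + alpha φ x) ^ 2 / (2 * ((alpha ψ x) ^ 2 + (alpha φ x) ^ 2))))
        = (1 + (Matrix.trace (outer ψ * outer φ)).re) / 2 ∧
      (1 + (Matrix.trace (outer ψ * outer φ)).re) / 2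
        = (1 + Complex.normSq (∑ a, (starRingEnd ℂ) (ψ a) * φ a)) / 2 := by
  constructor
  · have step1 : ∀ x : Fin n → Bool × Bool,
        (((alpha ψ x) ^ 2 + (alpha φ x) ^ 2) / 2 ^ (n + 1)) *
          ((alpha ψ x + alpha φ x) ^ 2 / (2 * ((alpha ψ x) ^ 2 + (alpha φ x) ^ 2)))
        = (alpha ψ x + alpha φ x) ^ 2 / (2 ^ (n + 1) * 2) := by
      intro x
      set u := alpha ψ x; set v := alpha φ x
      by_cases h : u ^ 2 + v ^ 2 = 0
      · have hu : u = 0 := by nlinarith [sq_nonneg u, sq_nonneg v]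
        have hv : v = 0 := by nlinarith [sq_nonneg u, sq_nonneg v]
        simp [hu, hv]
      · have h2 : (2 : ℝ) ^ (n + 1) ≠ 0 := by positivity
        field_simp
    simp_rw [step1, div_eq_mul_inv, ← Finset.sum_mul]
    have expand : ∑ x : Fin n → Bool × Bool, (alpha ψ x + alpha φ x) ^ 2
        = ∑ x : Fin n → Bool × Bool, (alpha ψ x * alpha ψ x
            + 2 * (alpha ψ x * alpha φ x) + alpha φ x * alpha φ x) := by
      exact Finset.sum_congr rfl fun x _ => by ring
    rw [expand, Finset.sum_add_distrib, Finset.sum_add_distrib, ← Finset.mul_sum,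
      alpha_sq_sum ψ ψ, alpha_sq_sum ψ φ, alpha_sq_sum φ φ,
      self_trace ψ hψ, self_trace φ hφ]
    have h2 : (2 : ℝ) ^ (n + 1) ≠ 0 := by positivity
    have hp : (2 : ℝ) ^ (n + 1) = 2 ^ n * 2 := by rw [pow_succ]
    field_simp
    ring
  · rw [trace_outer_mul]
    simp
end

section
/- Let ψ ∈ ℂ^{2^n} be a unit vector, set ρ = ψψ†, and let σ be any Hermitian 2^n × 2^n complex matrix. Write α_ρ(x) = tr(ρP_x), α_σ(x) = tr(σP_x), and p_ρ(x) = α_ρ(x)²/2^n. Then, with the convention that a summand equals 0 whenever α_ρ(x) = 0, Σ_{x ∈ ({0,1}²)^n} p_ρ(x) · (α_σ(x)/α_ρ(x)) = tr(ρσ). -/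
open scoped Matrix Kronecker
open Matrix

lemma pauli1_star (vw : Bool × Bool) (a b : Fin 2) :
    star (pauli1 vw a b) = pauli1 vw b a := by
  rcases vw with ⟨v, w⟩
  fin_cases a <;> fin_cases b <;> cases v <;> cases w <;>
    simp [pauli1, Matrix.mul_apply, Fin.sum_univ_two, Complex.ext_iff]

lemma pauli1_orth (a b c d : Fin 2) :
    ∑ vw : Bool × Bool, pauli1 vw b a * pauli1 vw d c
      = 2 * (if b = c then 1 else 0) * (if a = d then 1 else 0) := by
  fin_cases a <;> fin_cases b <;> fin_cases c <;> fin_cases d <;>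
    simp [Fintype.sum_prod_type, pauli1, Matrix.mul_apply, Fin.sum_univ_two] <;>
    ring_nf

lemma pauliString_herm {n : ℕ} (x : Fin n → Bool × Bool) :
    (pauliString x).IsHermitian := by
  ext a b
  simp only [conjTranspose_apply, pauliString, Matrix.of_apply, star_prod]
  exact Finset.prod_congr rfl fun i _ => pauli1_star _ _ _

lemma outer_herm {ι : Type} (ψ : ι → ℂ) : (outer ψ).IsHermitian := by
  ext a b
  simp [outer, conjTranspose_apply, mul_comm]

lemma sum_pauli_prod {n : ℕ} (a b c d : Fin n → Fin 2) :
    ∑ x : Fin n → Bool × Bool, pauliString x a b * pauliString x d c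
      = 2 ^ n * (if a = c then 1 else 0) * (if b = d then 1 else 0) := by
  simp only [pauliString, Matrix.of_apply, ← Finset.prod_mul_distrib]
  rw [← Fintype.piFinset_univ,
    ← Finset.prod_univ_sum (fun _ : Fin n => (Finset.univ : Finset (Bool × Bool)))
      (fun i vw => pauli1 vw (a i) (b i) * pauli1 vw (d i) (c i))]
  have : ∀ i : Fin n, ∑ vw : Bool × Bool, pauli1 vw (a i) (b i) * pauli1 vw (d i) (c i)
      = 2 * (if a i = c i then 1 else 0) * (if b i = d i then 1 else 0) :=
    fun i => pauli1_orth (b i) (a i) (c i) (d i)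
  simp only [this]
  rw [Finset.prod_mul_distrib, Finset.prod_mul_distrib, Finset.prod_const,
    Finset.prod_boole, Finset.prod_boole]
  simp [funext_iff, Finset.card_univ]

lemma main_identity {n : ℕ} (ρ σ : Matrix (Fin n → Fin 2) (Fin n → Fin 2) ℂ) :
    ∑ x : Fin n → Bool × Bool,
        Matrix.trace (pauliString x * ρ) * Matrix.trace (σ * pauliString x)
      = 2 ^ n * Matrix.trace (ρ * σ) := by
  have step : ∀ x : Fin n → Bool × Bool,
      Matrix.trace (pauliString x * ρ) * Matrix.trace (σ * pauliString x)
        = ∑ p : ((Fin n → Fin 2) × (Fin n → Fin 2)) × ((Fin n → Fin 2) × (Fin n → Fin 2)),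
            σ p.1.1 p.1.2 * ρ p.2.2 p.2.1 *
              (pauliString x p.2.1 p.2.2 * pauliString x p.1.2 p.1.1) := by
    intro x
    rw [Fintype.sum_prod_type]
    simp only [Fintype.sum_prod_type, Matrix.trace, Matrix.diag, Matrix.mul_apply,
      Finset.sum_mul, Finset.mul_sum]
    refine Finset.sum_congr rfl fun a _ => Finset.sum_congr rfl fun b _ =>
      Finset.sum_congr rfl fun c _ => Finset.sum_congr rfl fun d _ => by ring
  simp only [step]
  rw [Finset.sum_comm]
  simp only [← Finset.mul_sum, sum_pauli_prod]
  rw [Fintype.sum_prod_type]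
  simp only [Fintype.sum_prod_type, mul_ite, mul_one, mul_zero, ite_mul, zero_mul,
    Finset.sum_ite_eq, Finset.sum_ite_eq', Finset.mem_univ, if_true]
  simp only [Matrix.trace, Matrix.diag, Matrix.mul_apply, Finset.mul_sum]
  rw [Finset.sum_comm]
  refine Finset.sum_congr rfl fun a _ => Finset.sum_congr rfl fun b _ => by ring

lemma trace_mul_herm_im {m : Type} [Fintype m] [DecidableEq m]
    (A B : Matrix m m ℂ) (hA : A.IsHermitian) (hB : B.IsHermitian) :
    (Matrix.trace (A * B)).im = 0 := by
  have h : (starRingEnd ℂ) (Matrix.trace (A * B)) = Matrix.trace (A * B) := by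
    rw [show (starRingEnd ℂ) (Matrix.trace (A * B)) = star (Matrix.trace (A * B)) from rfl,
      ← Matrix.trace_conjTranspose, Matrix.conjTranspose_mul, hA.eq, hB.eq,
      Matrix.trace_mul_comm]
  exact Complex.conj_eq_iff_im.mp h

/-- Key identity of the asymmetric protocol (direct fidelity estimation):
`Σ_x p_ρ(x)·(α_σ(x)/α_ρ(x)) = tr(ρσ)` for a pure state `ρ = ψψ†` and any
Hermitian `σ`. (Summands with `α_ρ(x) = 0` vanish, consistent with the
convention, since `p_ρ(x) = 0` and division by zero is zero in Lean.) -/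
theorem asymmetric_estimator_identity (n : ℕ)
    (ψ : (Fin n → Fin 2) → ℂ)
    (hψ : ∑ a, Complex.normSq (ψ a) = 1)
    (σ : Matrix (Fin n → Fin 2) (Fin n → Fin 2) ℂ) (hσ : σ.IsHermitian) :
    ∑ x : Fin n → Bool × Bool,
        ((alpha ψ x) ^ 2 / 2 ^ n) *
          ((Matrix.trace (σ * pauliString x)).re / alpha ψ x)
      = (Matrix.trace (outer ψ * σ)).re := by
  have hρ : (outer ψ).IsHermitian := outer_herm ψ
  have summand : ∀ x : Fin n → Bool × Bool,
      ((alpha ψ x) ^ 2 / 2 ^ n) *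
          ((Matrix.trace (σ * pauliString x)).re / alpha ψ x)
        = (Matrix.trace (pauliString x * outer ψ) *
            Matrix.trace (σ * pauliString x)).re / 2 ^ n := by
    intro x
    have hz : (Matrix.trace (pauliString x * outer ψ)).im = 0 :=
      trace_mul_herm_im _ _ (pauliString_herm x) hρ
    have hw : (Matrix.trace (σ * pauliString x)).im = 0 :=
      trace_mul_herm_im _ _ hσ (pauliString_herm x)
    set z := Matrix.trace (pauliString x * outer ψ)
    set w := Matrix.trace (σ * pauliString x)
    have hzw : (z * w).re = z.re * w.re := by rw [Complex.mul_re, hz]; ring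
    show (z.re ^ 2 / 2 ^ n) * (w.re / z.re) = (z * w).re / 2 ^ n
    rw [hzw]
    rcases eq_or_ne z.re 0 with h | h
    · simp [h]
    · field_simp
  rw [Finset.sum_congr rfl fun x _ => summand x, ← Finset.sum_div,
    ← Complex.re_sum, main_identity (outer ψ) σ]
  have h2 : ((2 : ℂ)) ^ n = (((2 : ℝ) ^ n : ℝ) : ℂ) := by push_cast; ring
  rw [h2, Complex.re_ofReal_mul]
  field_simp
end

section
/- Let d ≥ 1, let U : Fin (d²) → M_d(ℂ) be a family of unitary matrices satisfying tr(U_j† U_k) = d·δ_{jk}, and let ψ ∈ ℂ^d ⊗ ℂ^d be a unit vector such that for every j the rank-one projection is invariant: (U_j ⊗ U_j)·ψψ†·(U_j ⊗ U_j)† = ψψ†. Then ψ is maximally entangled: for all i, j < d, Σ_{k < d} ψ_{(i,k)} · conj(ψ_{(j,k)}) = (1/d)·δ_{ij}, i.e., the partial trace of ψψ† over the second tensor factor equals I/d. -/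
open scoped Matrix Kronecker
open Matrix

/-- Partial trace over the second factor. -/
noncomputable def ptr {d : ℕ} (P : Matrix (Fin d × Fin d) (Fin d × Fin d) ℂ) :
    Matrix (Fin d) (Fin d) ℂ :=
  Matrix.of fun a c => ∑ b, P (a, b) (c, b)

lemma trace_stdBasis_mul {d : ℕ} (A : Matrix (Fin d) (Fin d) ℂ) (i j : Fin d) :
    Matrix.trace (Matrix.single i j 1 * A) = A j i := by
  simp [Matrix.trace, Matrix.diag, Matrix.mul_apply, Matrix.single, ite_and]

lemma kron_conjTranspose {d : ℕ} (A B : Matrix (Fin d) (Fin d) ℂ) :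
    (A ⊗ₖ B)ᴴ = Aᴴ ⊗ₖ Bᴴ := by
  ext ⟨i, k⟩ ⟨j, l⟩
  simp [Matrix.conjTranspose_apply, Matrix.kroneckerMap_apply, mul_comm]

lemma trace_kron_one {d : ℕ} (X : Matrix (Fin d) (Fin d) ℂ)
    (Q : Matrix (Fin d × Fin d) (Fin d × Fin d) ℂ) :
    Matrix.trace ((X ⊗ₖ (1 : Matrix (Fin d) (Fin d) ℂ)) * Q) = Matrix.trace (X * ptr Q) := by
  simp only [Matrix.trace, Matrix.diag, Matrix.mul_apply, Matrix.kroneckerMap_apply,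
    Fintype.sum_prod_type, ptr, Matrix.of_apply, Matrix.one_apply, mul_ite, ite_mul,
    mul_one, mul_zero, zero_mul, Finset.sum_ite_eq, Finset.mem_univ, if_true,
    Finset.mul_sum]
  refine Finset.sum_congr rfl fun a _ => ?_
  rw [Finset.sum_comm]

lemma ptr_conj {d : ℕ} (V : Matrix (Fin d) (Fin d) ℂ) (hV : Vᴴ * V = 1)
    (P : Matrix (Fin d × Fin d) (Fin d × Fin d) ℂ) :
    ptr ((V ⊗ₖ V) * P * (V ⊗ₖ V)ᴴ) = V * ptr P * Vᴴ := by
  have key : ∀ X : Matrix (Fin d) (Fin d) ℂ,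
      Matrix.trace (X * ptr ((V ⊗ₖ V) * P * (V ⊗ₖ V)ᴴ))
        = Matrix.trace (X * (V * ptr P * Vᴴ)) := by
    intro X
    rw [← trace_kron_one, kron_conjTranspose]
    have h1 : (X ⊗ₖ (1 : Matrix (Fin d) (Fin d) ℂ)) * ((V ⊗ₖ V) * P * (Vᴴ ⊗ₖ Vᴴ))
        = ((Vᴴ ⊗ₖ Vᴴ) * ((X ⊗ₖ (1 : Matrix (Fin d) (Fin d) ℂ)) * (V ⊗ₖ V)) * P)
            * (1 : Matrix (Fin d × Fin d) (Fin d × Fin d) ℂ) → True := fun _ => trivial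
    have e1 : (X ⊗ₖ (1 : Matrix (Fin d) (Fin d) ℂ)) * ((V ⊗ₖ V) * P * (Vᴴ ⊗ₖ Vᴴ))
        = (((X ⊗ₖ (1 : Matrix (Fin d) (Fin d) ℂ)) * (V ⊗ₖ V)) * P) * (Vᴴ ⊗ₖ Vᴴ) := by
      simp only [Matrix.mul_assoc]
    rw [e1, Matrix.trace_mul_comm]
    have e2 : (Vᴴ ⊗ₖ Vᴴ) * (((X ⊗ₖ (1 : Matrix (Fin d) (Fin d) ℂ)) * (V ⊗ₖ V)) * P)
        = ((Vᴴ ⊗ₖ Vᴴ) * ((X ⊗ₖ (1 : Matrix (Fin d) (Fin d) ℂ)) * (V ⊗ₖ V))) * P := by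
      simp only [Matrix.mul_assoc]
    rw [e2, ← Matrix.mul_kronecker_mul, ← Matrix.mul_kronecker_mul, Matrix.one_mul, hV,
      trace_kron_one, Matrix.trace_mul_comm]
    have e4 : ptr P * (Vᴴ * (X * V)) = (ptr P * Vᴴ) * (X * V) := by
      simp only [Matrix.mul_assoc]
    rw [e4, Matrix.trace_mul_comm]
    have e5 : (X * V) * (ptr P * Vᴴ) = X * (V * ptr P * Vᴴ) := by
      simp only [Matrix.mul_assoc]
    rw [e5]
  ext i j
  have := key (Matrix.single j i 1)
  rwa [trace_stdBasis_mul, trace_stdBasis_mul] at this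

/-- If `ψψ†` is invariant under `U_j ⊗ U_j` for all members of a Hilbert–Schmidt
orthonormal family of `d²` unitaries, then `ψ` is maximally entangled: the partial
trace of `ψψ†` over the second factor is `I/d`. -/
theorem invariant_implies_maximally_entangled (d : ℕ) (hd : 1 ≤ d)
    (U : Fin (d ^ 2) → Matrix (Fin d) (Fin d) ℂ)
    (hUunit : ∀ j, (U j)ᴴ * U j = 1)
    (htr : ∀ j k, Matrix.trace ((U j)ᴴ * U k) = if j = k then (d : ℂ) else 0)
    (ψ : Fin d × Fin d → ℂ) (hψ : ∑ p, Complex.normSq (ψ p) = 1)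
    (hinv : ∀ j, (U j ⊗ₖ U j) * outer ψ * (U j ⊗ₖ U j)ᴴ = outer ψ) :
    ∀ i j, ∑ k, ψ (i, k) * (starRingEnd ℂ) (ψ (j, k))
      = if i = j then ((d : ℂ))⁻¹ else 0 := by
  have hd0 : (d : ℂ) ≠ 0 := by
    exact_mod_cast Nat.cast_ne_zero.mpr (by omega)
  set M : Matrix (Fin d) (Fin d) ℂ := ptr (outer ψ) with hM
  -- M commutes with each U j
  have hMU : ∀ j, U j * M = M * U j := by
    intro j
    have h1 : U j * M * (U j)ᴴ = M := by
      rw [hM, ← ptr_conj (U j) (hUunit j) (outer ψ), hinv j]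
    calc U j * M = U j * M * ((U j)ᴴ * U j) := by rw [hUunit j, Matrix.mul_one]
      _ = (U j * M * (U j)ᴴ) * U j := by simp only [Matrix.mul_assoc]
      _ = M * U j := by rw [h1]
  -- the U j are linearly independent
  have hli : LinearIndependent ℂ U := by
    rw [Fintype.linearIndependent_iff]
    intro g hg k
    have : Matrix.trace ((U k)ᴴ * (∑ i, g i • U i)) = 0 := by rw [hg]; simp
    rw [Finset.mul_sum, Matrix.trace_sum] at this
    simp only [Matrix.mul_smul, Matrix.trace_smul, htr, smul_eq_mul] at this
    rw [Finset.sum_eq_single k (fun b _ hb => by simp [if_neg (Ne.symm hb)]) (by simp)] at this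
    simp only [if_pos rfl] at this
    exact (mul_eq_zero.mp this).resolve_right hd0
  -- they span everything
  have hspan : Submodule.span ℂ (Set.range U) = ⊤ := by
    haveI : Nonempty (Fin (d ^ 2)) := ⟨⟨0, by positivity⟩⟩
    apply LinearIndependent.span_eq_top_of_card_eq_finrank hli
    simp [Module.finrank_matrix, pow_two]
  -- hence M commutes with everything
  have hcomm : ∀ X : Matrix (Fin d) (Fin d) ℂ, X * M = M * X := by
    intro X
    have hX : X ∈ Submodule.span ℂ (Set.range U) := hspan ▸ Submodule.mem_top
    induction hX using Submodule.span_induction with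
    | mem x hx => obtain ⟨j, rfl⟩ := hx; exact hMU j
    | zero => simp
    | add x y _ _ hx hy => rw [add_mul, mul_add, hx, hy]
    | smul c x _ hx => rw [smul_mul_assoc, mul_smul_comm, hx]
  -- so M is a scalar matrix
  obtain ⟨c, hc⟩ := Matrix.mem_range_scalar_iff_commute_single'.mpr
    (fun i j => (hcomm (Matrix.single i j 1)))
  -- trace of M is 1
  have htrM : Matrix.trace M = 1 := by
    have : Matrix.trace M = ∑ p : Fin d × Fin d, (ψ p * (starRingEnd ℂ) (ψ p)) := by
      rw [hM]
      simp [Matrix.trace, Matrix.diag, ptr, outer, Fintype.sum_prod_type]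
    rw [this]
    have : ∀ p : Fin d × Fin d, ψ p * (starRingEnd ℂ) (ψ p) = (Complex.normSq (ψ p) : ℂ) := by
      intro p; rw [Complex.mul_conj]
    simp_rw [this]
    rw [← Complex.ofReal_sum, hψ, Complex.ofReal_one]
  -- compute c
  have htrc : Matrix.trace (Matrix.scalar (Fin d) c) = (d : ℂ) * c := by
    simp [Matrix.scalar, Matrix.trace, Matrix.diag, mul_comm]
  have hc1 : c = ((d : ℂ))⁻¹ := by
    rw [← hc, htrc, mul_comm] at htrM
    exact eq_inv_of_mul_eq_one_left htrM
  intro i j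
  have : M i j = if i = j then ((d : ℂ))⁻¹ else 0 := by
    rw [← hc, hc1]
    simp [Matrix.scalar, Matrix.one_apply, Matrix.diagonal]
  rw [← this, hM]
  simp [ptr, outer]
end

section
/- Fix n ≥ 2 and a real τ with 0 < τ ≤ 1/2; set m = √(τ(1−τ)/2^n) and assume 2m < τ. Let φ₀ = √τ · e_{0} + √(1−τ) · (2^{−n/2} Σ_{v ∈ {0,1}^n} e_v) ∈ ℂ^{2^n} (where e_0 is the standard basis vector indexed by the all-zeros string), let K = 1 + 2m, and let φ = K^{−1/2} φ₀ (a unit vector). Then for every real η with 0 < η ≤ τ: Σ_{x : α(x)² ≤ η²} α(x)²/2^n ≤ 2τ(1−τ), where α(x) = tr(P_x φφ†) and the sum is over x ∈ ({0,1}²)^n. -/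
open scoped Matrix Kronecker
open Matrix

/- ### Auxiliary lemmas -/

lemma pauli1_00 (vw : Bool × Bool) :
    pauli1 vw 0 0 = if vw.1 = false then 1 else 0 := by
  rcases vw with ⟨v, w⟩
  cases v <;> cases w <;>
    simp [pauli1, Matrix.mul_apply, Fin.sum_univ_succ, Matrix.one_apply]

lemma pauli1_row (vw : Bool × Bool) :
    ∑ b, pauli1 vw 0 b = if vw = (true, true) then -Complex.I else 1 := by
  rcases vw with ⟨v, w⟩
  cases v <;> cases w <;>
    simp [pauli1, Matrix.mul_apply, Fin.sum_univ_succ, Matrix.one_apply]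

lemma pauli1_col (vw : Bool × Bool) :
    ∑ a, pauli1 vw a 0 = if vw = (true, true) then Complex.I else 1 := by
  rcases vw with ⟨v, w⟩
  cases v <;> cases w <;>
    (simp [pauli1, Matrix.mul_apply, Fin.sum_univ_succ, Matrix.one_apply]; try norm_num)

lemma pauli1_all (vw : Bool × Bool) :
    ∑ a, ∑ b, pauli1 vw a b = if vw.2 = false then 2 else 0 := by
  rcases vw with ⟨v, w⟩
  cases v <;> cases w <;>
    (simp [pauli1, Matrix.mul_apply, Fin.sum_univ_succ, Matrix.one_apply]; try norm_num)

/-- product of row sums of the single-qubit factors -/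
noncomputable def Rprod {n : ℕ} (x : Fin n → Bool × Bool) : ℂ :=
  ∏ i, ∑ b, pauli1 (x i) 0 b

lemma Rprod_of_fst {n : ℕ} {x : Fin n → Bool × Bool} (h : ∀ i, (x i).1 = false) :
    Rprod x = 1 := by
  unfold Rprod
  refine Finset.prod_eq_one fun i _ => ?_
  rw [pauli1_row, if_neg]
  intro hx
  have := h i
  rw [hx] at this
  simp at this

lemma Rprod_of_snd {n : ℕ} {x : Fin n → Bool × Bool} (h : ∀ i, (x i).2 = false) :
    Rprod x = 1 := by
  unfold Rprod
  refine Finset.prod_eq_one fun i _ => ?_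
  rw [pauli1_row, if_neg]
  intro hx
  have := h i
  rw [hx] at this
  simp at this

lemma conj_Rprod {n : ℕ} (x : Fin n → Bool × Bool) :
    (starRingEnd ℂ) (Rprod x) = ∏ i, ∑ a, pauli1 (x i) a 0 := by
  rw [Rprod, map_prod]
  refine Finset.prod_congr rfl fun i _ => ?_
  rw [pauli1_row, pauli1_col]
  split <;> simp

lemma sum_Rprod_sq (n : ℕ) :
    ∑ x : Fin n → Bool × Bool, (Rprod x).re ^ 2 = (2 ^ n + 4 ^ n) / 2 := by
  have key : ∀ z : ℂ, (z.re : ℝ) ^ 2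
      = ((z ^ 2 + 2 * (z * (starRingEnd ℂ) z) + ((starRingEnd ℂ) z) ^ 2).re) / 4 := by
    intro z
    simp [pow_two, Complex.mul_re, Complex.add_re, Complex.mul_im]
    ring
  have hval1 : ∀ vw : Bool × Bool, (∑ b, pauli1 vw 0 b) ^ 2
      = if vw = (true, true) then -1 else 1 := by
    intro vw; rw [pauli1_row]; split <;> simp [pow_two]
  have hval2 : ∀ vw : Bool × Bool,
      (∑ b, pauli1 vw 0 b) * (starRingEnd ℂ) (∑ b, pauli1 vw 0 b) = 1 := by
    intro vw; rw [pauli1_row]; split <;> simp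
  have h1 : ∑ x : Fin n → Bool × Bool, (Rprod x) ^ 2 = 2 ^ n := by
    have e : ∀ x : Fin n → Bool × Bool, (Rprod x) ^ 2
        = ∏ i, (∑ b, pauli1 (x i) 0 b) ^ 2 := by
      intro x; rw [Rprod, ← Finset.prod_pow]
    simp_rw [e]
    rw [← Fintype.prod_sum (fun (_ : Fin n) (vw : Bool × Bool) => (∑ b, pauli1 vw 0 b) ^ 2)]
    have : ∑ vw : Bool × Bool, (∑ b, pauli1 vw 0 b) ^ 2 = 2 := by
      simp only [hval1, Fintype.sum_prod_type, Fintype.sum_bool]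
      norm_num
    rw [Finset.prod_congr rfl fun i _ => this, Finset.prod_const]
    simp
  have h2 : ∑ x : Fin n → Bool × Bool, (Rprod x) * (starRingEnd ℂ) (Rprod x) = 4 ^ n := by
    have e : ∀ x : Fin n → Bool × Bool, (Rprod x) * (starRingEnd ℂ) (Rprod x)
        = ∏ i, ((∑ b, pauli1 (x i) 0 b) * (starRingEnd ℂ) (∑ b, pauli1 (x i) 0 b)) := by
      intro x; rw [Rprod, map_prod, ← Finset.prod_mul_distrib]
    simp_rw [e, hval2]
    simp
  have h3 : ∑ x : Fin n → Bool × Bool, ((starRingEnd ℂ) (Rprod x)) ^ 2 = 2 ^ n := by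
    have : ∑ x : Fin n → Bool × Bool, ((starRingEnd ℂ) (Rprod x)) ^ 2
        = (starRingEnd ℂ) (∑ x : Fin n → Bool × Bool, (Rprod x) ^ 2) := by
      rw [map_sum]; simp [map_pow]
    rw [this, h1, map_pow, show (2:ℂ) = ((2:ℝ):ℂ) by norm_num, Complex.conj_ofReal]
  calc ∑ x : Fin n → Bool × Bool, (Rprod x).re ^ 2
      = ∑ x : Fin n → Bool × Bool,
          ((Rprod x ^ 2 + 2 * (Rprod x * (starRingEnd ℂ) (Rprod x))
            + ((starRingEnd ℂ) (Rprod x)) ^ 2).re) / 4 := by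
        exact Finset.sum_congr rfl fun x _ => key _
    _ = (2 ^ n + 4 ^ n) / 2 := by
        rw [← Finset.sum_div, ← Complex.re_sum]
        simp_rw [Finset.sum_add_distrib]
        rw [h1, h3, ← Finset.mul_sum, h2]
        simp only [Complex.add_re, Complex.mul_re,
          show (2:ℂ) = ((2:ℝ):ℂ) by norm_num, show (4:ℂ) = ((4:ℝ):ℂ) by norm_num,
          ← Complex.ofReal_pow, Complex.ofReal_re, Complex.ofReal_im]
        ring

lemma alpha_formula {n : ℕ} (c d : ℝ) (x : Fin n → Bool × Bool) :
    alpha (fun v => (if v = fun _ => 0 then (c:ℂ) else 0) + (d:ℂ)) x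
      = c ^ 2 * (if ∀ i, (x i).1 = false then 1 else 0)
        + 2 * c * d * (Rprod x).re
        + d ^ 2 * 2 ^ n * (if ∀ i, (x i).2 = false then 1 else 0) := by
  classical
  have main : Matrix.trace (pauliString x * outer
      (fun v => (if v = fun _ => 0 then (c:ℂ) else 0) + (d:ℂ)))
      = (c:ℂ) ^ 2 * (if ∀ i, (x i).1 = false then 1 else 0)
        + (c:ℂ) * d * (Rprod x + (starRingEnd ℂ) (Rprod x))
        + (d:ℂ) ^ 2 * 2 ^ n * (if ∀ i, (x i).2 = false then 1 else 0) := by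
    have expand : Matrix.trace (pauliString x * outer
        (fun v => (if v = fun _ => 0 then (c:ℂ) else 0) + (d:ℂ)))
        = ∑ a : Fin n → Fin 2, ∑ b : Fin n → Fin 2,
            ((∏ i, pauli1 (x i) (a i) (b i)) *
              (if b = fun _ => 0 then (c:ℂ) else 0) * (if a = fun _ => 0 then (c:ℂ) else 0)
            + ((∏ i, pauli1 (x i) (a i) (b i)) *
                (if b = fun _ => 0 then (c:ℂ) else 0)) * d
            + ((∏ i, pauli1 (x i) (a i) (b i)) *
                (if a = fun _ => 0 then (c:ℂ) else 0)) * d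
            + (∏ i, pauli1 (x i) (a i) (b i)) * d * d) := by
      simp only [Matrix.trace, Matrix.diag, Matrix.mul_apply, pauliString, outer,
        Matrix.of_apply]
      refine Finset.sum_congr rfl fun a _ => Finset.sum_congr rfl fun b _ => ?_
      rw [map_add, apply_ite (starRingEnd ℂ), map_zero, Complex.conj_ofReal,
        Complex.conj_ofReal]
      ring
    rw [expand]
    simp_rw [Finset.sum_add_distrib]
    have prod00 : (∏ i, pauli1 (x i) 0 0) = if ∀ i, (x i).1 = false then 1 else 0 := by
      simp_rw [pauli1_00]
      rw [Finset.prod_boole]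
      simp
    have S1 : ∑ a : Fin n → Fin 2, ∑ b : Fin n → Fin 2,
        (∏ i, pauli1 (x i) (a i) (b i)) *
          (if b = fun _ => 0 then (c:ℂ) else 0) * (if a = fun _ => 0 then (c:ℂ) else 0)
        = (c:ℂ) ^ 2 * (if ∀ i, (x i).1 = false then 1 else 0) := by
      simp only [mul_ite, mul_zero, ite_mul, zero_mul, Finset.sum_ite_irrel,
        Finset.sum_const_zero, Finset.sum_ite_eq', Finset.mem_univ, if_true]
      rw [prod00]
      split <;> ring
    have S2 : ∑ a : Fin n → Fin 2, ∑ b : Fin n → Fin 2,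
        ((∏ i, pauli1 (x i) (a i) (b i)) * (if b = fun _ => 0 then (c:ℂ) else 0)) * d
        = (c:ℂ) * d * (starRingEnd ℂ) (Rprod x) := by
      simp only [mul_ite, mul_zero, ite_mul, zero_mul, Finset.sum_ite_irrel,
        Finset.sum_const_zero, Finset.sum_ite_eq', Finset.mem_univ, if_true]
      rw [← Finset.sum_mul, ← Finset.sum_mul]
      rw [show ∑ a : Fin n → Fin 2, ∏ i, pauli1 (x i) (a i) 0
          = ∏ i, ∑ s, pauli1 (x i) s 0 from
        (Fintype.prod_sum (fun i (s : Fin 2) => pauli1 (x i) s 0)).symm]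
      rw [← conj_Rprod]
      ring
    have S3 : ∑ a : Fin n → Fin 2, ∑ b : Fin n → Fin 2,
        ((∏ i, pauli1 (x i) (a i) (b i)) * (if a = fun _ => 0 then (c:ℂ) else 0)) * d
        = (c:ℂ) * d * Rprod x := by
      simp only [mul_ite, mul_zero, ite_mul, zero_mul, Finset.sum_ite_irrel,
        Finset.sum_const_zero, Finset.sum_ite_eq', Finset.mem_univ, if_true]
      rw [← Finset.sum_mul, ← Finset.sum_mul]
      rw [show ∑ b : Fin n → Fin 2, ∏ i, pauli1 (x i) 0 (b i)
          = ∏ i, ∑ t, pauli1 (x i) 0 t from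
        (Fintype.prod_sum (fun i (t : Fin 2) => pauli1 (x i) 0 t)).symm]
      rw [Rprod]
      ring
    have S4 : ∑ a : Fin n → Fin 2, ∑ b : Fin n → Fin 2,
        (∏ i, pauli1 (x i) (a i) (b i)) * d * d
        = (d:ℂ) ^ 2 * 2 ^ n * (if ∀ i, (x i).2 = false then 1 else 0) := by
      simp_rw [← Finset.sum_mul]
      have inner : ∀ a : Fin n → Fin 2,
          ∑ b : Fin n → Fin 2, ∏ i, pauli1 (x i) (a i) (b i)
          = ∏ i, ∑ t, pauli1 (x i) (a i) t := fun a =>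
        (Fintype.prod_sum (fun i (t : Fin 2) => pauli1 (x i) (a i) t)).symm
      simp_rw [inner]
      rw [show ∑ a : Fin n → Fin 2, ∏ i, ∑ t, pauli1 (x i) (a i) t
          = ∏ i, ∑ s, ∑ t, pauli1 (x i) s t from
        (Fintype.prod_sum (fun i (s : Fin 2) => ∑ t, pauli1 (x i) s t)).symm]
      simp_rw [pauli1_all]
      have : ∀ i : Fin n, (if (x i).2 = false then (2:ℂ) else 0)
          = 2 * (if (x i).2 = false then 1 else 0) := by intro i; split <;> ring
      simp_rw [this]
      rw [Finset.prod_mul_distrib, Finset.prod_const, Finset.prod_boole]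
      simp only [Finset.mem_univ, forall_true_left, Finset.card_univ, Fintype.card_fin]
      split <;> ring
    rw [S1, S2, S3, S4]
    ring
  rw [alpha, main, Complex.add_conj]
  rw [show (if ∀ i, (x i).1 = false then (1:ℂ) else 0)
      = (((if ∀ i, (x i).1 = false then (1:ℝ) else 0) : ℝ) : ℂ) by split <;> simp]
  rw [show (if ∀ i, (x i).2 = false then (1:ℂ) else 0)
      = (((if ∀ i, (x i).2 = false then (1:ℝ) else 0) : ℝ) : ℂ) by split <;> simp]
  rw [show (2:ℂ) = ((2:ℝ):ℂ) by norm_num]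
  simp only [← Complex.ofReal_pow, ← Complex.ofReal_mul, ← Complex.ofReal_add,
    Complex.ofReal_re]
  ring

set_option maxHeartbeats 1000000

/-- Appendix F example: the state `φ = K^{−1/2}(√τ|0…0⟩ + √(1−τ)|+…+⟩)` has a small
CDF: for `0 < η ≤ τ`, `Σ_{x : α(x)² ≤ η²} α(x)²/2^n ≤ 2τ(1−τ)`. -/
theorem cdf_small_despite_large_magic (n : ℕ) (hn : 2 ≤ n)
    (τ : ℝ) (hτ0 : 0 < τ) (hτhalf : τ ≤ 1 / 2)
    (m : ℝ) (hm : m = Real.sqrt (τ * (1 - τ) / 2 ^ n)) (hmτ : 2 * m < τ)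
    (φ₀ : (Fin n → Fin 2) → ℂ)
    (hφ₀ : φ₀ = fun v =>
      (if v = fun _ => 0 then ((Real.sqrt τ : ℝ) : ℂ) else 0) +
        ((Real.sqrt (1 - τ) : ℝ) : ℂ) * (((Real.sqrt (2 ^ n) : ℝ) : ℂ))⁻¹)
    (K : ℝ) (hK : K = 1 + 2 * m)
    (φ : (Fin n → Fin 2) → ℂ) (hφ : φ = (((Real.sqrt K : ℝ) : ℂ))⁻¹ • φ₀)
    (η : ℝ) (hη0 : 0 < η) (hητ : η ≤ τ) :
    ∑ x ∈ Finset.univ.filter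
        (fun x : Fin n → Bool × Bool => (alpha φ x) ^ 2 ≤ η ^ 2),
        (alpha φ x) ^ 2 / 2 ^ n
      ≤ 2 * τ * (1 - τ) := by
  classical
  -- basic numeric facts
  set A : ℝ := 2 ^ n with hA
  have hA0 : (0:ℝ) < A := by positivity
  have hA4 : (4:ℝ) ≤ A := by
    calc (4:ℝ) = 2 ^ 2 := by norm_num
    _ ≤ 2 ^ n := by exact pow_le_pow_right₀ (by norm_num) hn
  have hτ1 : τ < 1 := by linarith
  have h1τ0 : (0:ℝ) < 1 - τ := by linarith
  have hm0 : 0 < m := by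
    rw [hm]; exact Real.sqrt_pos.mpr (by positivity)
  have hm2 : m ^ 2 * A = τ * (1 - τ) := by
    have : m ^ 2 = τ * (1 - τ) / A := by
      rw [hm, Real.sq_sqrt (by positivity)]
    rw [this]; field_simp
  have hK0 : (0:ℝ) < K := by rw [hK]; linarith
  -- constants
  set c : ℝ := (Real.sqrt K)⁻¹ * Real.sqrt τ with hcdef
  set d : ℝ := (Real.sqrt K)⁻¹ * (Real.sqrt (1 - τ) * (Real.sqrt A)⁻¹) with hddef
  have hc0 : 0 ≤ c := by positivity
  have hd0 : 0 ≤ d := by positivity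
  have hc2 : c ^ 2 = τ / K := by
    rw [hcdef, mul_pow, inv_pow, Real.sq_sqrt hτ0.le, Real.sq_sqrt hK0.le]
    ring
  have hd2 : d ^ 2 = (1 - τ) / (K * A) := by
    rw [hddef, mul_pow, mul_pow, inv_pow, inv_pow, Real.sq_sqrt h1τ0.le,
      Real.sq_sqrt hK0.le, Real.sq_sqrt hA0.le]
    ring
  have hcd : c * d = m / K := by
    have h1 : (c * d) ^ 2 = (m / K) ^ 2 := by
      rw [mul_pow, hc2, hd2, div_pow]
      rw [show m ^ 2 = τ * (1 - τ) / A by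
        rw [hm, Real.sq_sqrt (by positivity)]]
      field_simp
    have h2 : 0 ≤ c * d := mul_nonneg hc0 hd0
    have h3 : 0 ≤ m / K := by positivity
    calc c * d = Real.sqrt ((c * d) ^ 2) := (Real.sqrt_sq h2).symm
      _ = Real.sqrt ((m / K) ^ 2) := by rw [h1]
      _ = m / K := Real.sqrt_sq h3
  have hd2A : d ^ 2 * A = (1 - τ) / K := by
    rw [hd2]; field_simp
  -- rewrite φ
  have hφ' : φ = fun v => (if v = fun _ => 0 then (c:ℂ) else 0) + (d:ℂ) := by
    funext v
    rw [hφ, hφ₀]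
    simp only [Pi.smul_apply, smul_eq_mul, hcdef, hddef]
    push_cast
    rw [mul_add, mul_ite, mul_zero]
  have hαf : ∀ x : Fin n → Bool × Bool, alpha φ x
      = c ^ 2 * (if ∀ i, (x i).1 = false then 1 else 0)
        + 2 * c * d * (Rprod x).re
        + d ^ 2 * A * (if ∀ i, (x i).2 = false then 1 else 0) := by
    intro x
    rw [hφ']
    exact alpha_formula c d x
  -- exclusions
  have case1 : ∀ x : Fin n → Bool × Bool, (∀ i, (x i).1 = false) →
      ¬ (alpha φ x ^ 2 ≤ η ^ 2) := by
    intro x h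
    have hr : Rprod x = 1 := Rprod_of_fst h
    have hα : alpha φ x = τ / K + 2 * (m / K)
        + (1 - τ) / K * (if ∀ i, (x i).2 = false then 1 else 0) := by
      rw [hαf x, if_pos h, hr]
      rw [show ((1:ℂ)).re = 1 from by simp, hc2, hd2A,
        show 2 * c * d = 2 * (m / K) from by rw [mul_assoc, hcd]]
      ring
    have hb : (0:ℝ) ≤ (1 - τ) / K * (if ∀ i, (x i).2 = false then 1 else 0) := by
      have : (0:ℝ) ≤ (if ∀ i, (x i).2 = false then (1:ℝ) else 0) := by split <;> norm_num
      positivity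
    have hgt : τ < alpha φ x := by
      rw [hα]
      have : τ < τ / K + 2 * (m / K) := by
        rw [show τ / K + 2 * (m / K) = (τ + 2 * m) / K from by ring,
          lt_div_iff₀ hK0, hK]
        nlinarith
      linarith
    apply not_le.mpr
    have : η < alpha φ x := lt_of_le_of_lt hητ hgt
    nlinarith
  have case2 : ∀ x : Fin n → Bool × Bool, (∀ i, (x i).2 = false) →
      ¬ (alpha φ x ^ 2 ≤ η ^ 2) := by
    intro x h
    have hr : Rprod x = 1 := Rprod_of_snd h
    have hα : alpha φ x = τ / K * (if ∀ i, (x i).1 = false then 1 else 0)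
        + 2 * (m / K) + (1 - τ) / K := by
      rw [hαf x, if_pos h, hr]
      have h1 : ((1:ℂ)).re = 1 := by simp
      rw [h1, hc2, hd2A]
      have : 2 * c * d = 2 * (m / K) := by rw [mul_assoc, hcd]
      rw [this]
      ring
    have hb : (0:ℝ) ≤ τ / K * (if ∀ i, (x i).1 = false then 1 else 0) := by
      have : (0:ℝ) ≤ (if ∀ i, (x i).1 = false then (1:ℝ) else 0) := by split <;> norm_num
      positivity
    have hgt : τ < alpha φ x := by
      rw [hα]
      have : τ < 2 * (m / K) + (1 - τ) / K := by
        rw [show 2 * (m / K) + (1 - τ) / K = (2 * m + (1 - τ)) / K from by ring,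
          lt_div_iff₀ hK0, hK]
        nlinarith
      linarith
    apply not_le.mpr
    have : η < alpha φ x := lt_of_le_of_lt hητ hgt
    nlinarith
  -- on the filter, α(x)² = 4(cd)²·(Re Rprod x)²
  have key : ∀ x : Fin n → Bool × Bool, (alpha φ x) ^ 2 ≤ η ^ 2 →
      alpha φ x ^ 2 = 4 * (c * d) ^ 2 * ((Rprod x).re) ^ 2 := by
    intro x hle
    have h1 : ¬ ∀ i, (x i).1 = false := fun h => case1 x h hle
    have h2 : ¬ ∀ i, (x i).2 = false := fun h => case2 x h hle
    rw [hαf x, if_neg h1, if_neg h2]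
    ring
  -- final numeric inequalities
  have h4m2 : 4 * m ^ 2 < τ ^ 2 := by nlinarith
  have hτA : 4 * (1 - τ) < τ * A := by nlinarith
  have hmA : 1 ≤ m * A := by nlinarith [sq_nonneg (m * A - 1), mul_pos hm0 hA0]
  have hK2 : K ^ 2 = 1 + 4 * m + 4 * m ^ 2 := by rw [hK]; ring
  have h4n : (4:ℝ) ^ n = A ^ 2 := by
    rw [hA, show (4:ℝ) = 2 ^ 2 by norm_num, ← pow_mul, mul_comm, pow_mul]
  calc ∑ x ∈ Finset.univ.filter
        (fun x : Fin n → Bool × Bool => (alpha φ x) ^ 2 ≤ η ^ 2),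
        (alpha φ x) ^ 2 / 2 ^ n
      = ∑ x ∈ Finset.univ.filter
        (fun x : Fin n → Bool × Bool => (alpha φ x) ^ 2 ≤ η ^ 2),
        (4 * (c * d) ^ 2 * ((Rprod x).re) ^ 2) / A :=
      Finset.sum_congr rfl fun x hx => by
        rw [key x (Finset.mem_filter.mp hx).2]
    _ ≤ ∑ x : Fin n → Bool × Bool, (4 * (c * d) ^ 2 * ((Rprod x).re) ^ 2) / A :=
      Finset.sum_le_sum_of_subset_of_nonneg (Finset.filter_subset _ _)
        (fun x _ _ => by positivity)
    _ = (4 * (c * d) ^ 2 / A) * ∑ x : Fin n → Bool × Bool, ((Rprod x).re) ^ 2 := by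
      rw [Finset.mul_sum]
      exact Finset.sum_congr rfl fun x _ => by ring
    _ = (4 * (m / K) ^ 2 / A) * ((A + A ^ 2) / 2) := by
      rw [sum_Rprod_sq, hcd, h4n, ← hA]
    _ ≤ 2 * τ * (1 - τ) := by
      have e : 4 * (m / K) ^ 2 / A * ((A + A ^ 2) / 2)
          = (2 * m ^ 2 * (1 + A)) / K ^ 2 := by
        rw [div_pow]
        field_simp
        ring
      rw [e, div_le_iff₀ (by positivity : (0:ℝ) < K ^ 2)]
      nlinarith [mul_le_mul_of_nonneg_left hmA (mul_pos hm0 hm0).le, hm2, hK2,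
        mul_pos (mul_pos hm0 hm0) hA0, mul_pos hm0 (mul_pos hm0 (mul_pos hm0 hA0))]
end
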